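/- Let φ : A → A^k be a substitution of constant length k ≥ 2 over a finite alphabet A. The following are equivalent: (i) the incidence matrix of the discrepancy substitution φ_s is nilpotent; (ii) there exists n ∈ ℕ such that (φ_s)^n(α) is the empty word for every unordered pair α of distinct letters; (iii) there exists n ∈ ℕ such that the words φ^n(a), a ∈ A, are all equal. -/

import Mathlib

variable {A : Type*}

/-- A substitution `φ : A → A^*` extended to finite words by concatenation. -/
def subExt (φ : A → List A) (w : List A) : List A := w.flatMap φ

/-- Composition of substitutions: `(φ ∘ τ)(a) = φ(τ(a))`. -/
def subComp (φ τ : A → List A) : A → List A := fun a => subExt φ (τ a)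

/-- The `n`-th power `φ^n` of a substitution. -/
def subPow (φ : A → List A) : ℕ → A → List A
  | 0 => fun a => [a]
  | n + 1 => subComp φ (subPow φ n)

/-- The discrepancy substitution `φ_s` of `φ`, defined on unordered pairs of letters:
`φ_s({a,b})` is the word, over the alphabet of unordered pairs, obtained by concatenating
the pairs `{φ(a)_i, φ(b)_i}` over those positions `i` where `φ(a)_i ≠ φ(b)_i`. -/
def discrep [DecidableEq A] (φ : A → List A) : Sym2 A → List (Sym2 A) :=
  Sym2.lift ⟨fun a b => ((φ a).zip (φ b)).filterMap
      (fun p => if p.1 ≠ p.2 then some (Sym2.mk p.1 p.2) else none),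
    by
      intro a b
      show List.filterMap _ ((φ a).zip (φ b)) = List.filterMap _ ((φ b).zip (φ a))
      rw [← List.zip_swap (φ a) (φ b), List.filterMap_map]
      congr 1
      funext p
      obtain ⟨x, y⟩ := p
      by_cases h : x = y
      · simp [h]
      · simp only [Function.comp_apply, Prod.swap_prod_mk]
        rw [if_pos (by simp [h]), if_pos (by simp [Ne.symm h])]
        all_goals exact congrArg some Sym2.eq_swap⟩

/-- The alphabet of the discrepancy substitution: unordered pairs of *distinct* letters. -/
abbrev PairAlphabet (A : Type*) := {α : Sym2 A // ¬ α.IsDiag}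

/-- The incidence matrix of the discrepancy substitution `φ_s`: the `(α, β)` entry is the
number of occurrences of the letter `α` in the word `φ_s(β)`. -/
def discrepMatrix [DecidableEq A] (φ : A → List A) :
    Matrix (PairAlphabet A) (PairAlphabet A) ℕ :=
  fun α β => (discrep φ β.1).count α.1

section Aux

variable [DecidableEq A]

private lemma discrep_mk (φ : A → List A) (a b : A) :
    discrep φ (Sym2.mk a b) =
      ((φ a).zip (φ b)).filterMap
        (fun p => if p.1 ≠ p.2 then some (Sym2.mk p.1 p.2) else none) := rfl

private lemma filterMap_zip_self (w : List A) :
    (w.zip w).filterMap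
      (fun p : A × A => if p.1 ≠ p.2 then some (Sym2.mk p.1 p.2) else none) = [] := by
  induction w with
  | nil => rfl
  | cons c w ih => simpa using ih

private lemma eq_of_filterMap_zip (u : List A) : ∀ (v : List A), u.length = v.length →
    (u.zip v).filterMap
      (fun p : A × A => if p.1 ≠ p.2 then some (Sym2.mk p.1 p.2) else none) = [] →
    u = v := by
  induction u with
  | nil =>
    intro v hl _
    exact (List.length_eq_zero_iff.mp hl.symm).symm
  | cons x u ih =>
    intro v hl he
    cases v with
    | nil => simp at hl
    | cons y v =>
      by_cases hxy : x = y
      · subst hxy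
        rw [List.zip_cons_cons, List.filterMap_cons_none (by simp)] at he
        rw [ih v (by simpa using hl) he]
      · exfalso
        rw [List.zip_cons_cons,
          List.filterMap_cons_some (b := Sym2.mk x y) (by simp [hxy])] at he
        simp at he

private lemma nondiag_of_mem_discrep {φ : A → List A} {γ α : Sym2 A}
    (h : γ ∈ discrep φ α) : ¬ γ.IsDiag := by
  induction α using Sym2.ind with
  | _ a b =>
    rw [discrep_mk, List.mem_filterMap] at h
    obtain ⟨p, -, hp⟩ := h
    by_cases hpe : p.1 = p.2
    · simp [hpe] at hp
    · rw [if_pos hpe] at hp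
      rw [← Option.some_inj.mp hp, Sym2.isDiag_iff_proj_eq]
      exact hpe

private lemma subExt_cons (φ : A → List A) (c : A) (w : List A) :
    subExt φ (c :: w) = φ c ++ subExt φ w := List.flatMap_cons

private lemma length_subExt {φ : A → List A} {k : ℕ} (hφ : ∀ a, (φ a).length = k)
    (w : List A) : (subExt φ w).length = k * w.length := by
  induction w with
  | nil => simp [subExt]
  | cons c w ih =>
    rw [subExt_cons, List.length_append, ih, hφ, List.length_cons]
    ring

private lemma length_subPow {φ : A → List A} {k : ℕ} (hφ : ∀ a, (φ a).length = k)
    (n : ℕ) (a : A) : (subPow φ n a).length = k ^ n := by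
  induction n generalizing a with
  | zero => rfl
  | succ n ih =>
    show (subExt φ (subPow φ n a)).length = k ^ (n + 1)
    rw [length_subExt hφ, ih, pow_succ, mul_comm]

private lemma zip_flatMap_key {φ : A → List A} {k : ℕ} (hφ : ∀ a, (φ a).length = k)
    (u : List A) : ∀ (v : List A), u.length = v.length →
    ((subExt φ u).zip (subExt φ v)).filterMap
        (fun p : A × A => if p.1 ≠ p.2 then some (Sym2.mk p.1 p.2) else none) =
      subExt (discrep φ) ((u.zip v).filterMap
        (fun p : A × A => if p.1 ≠ p.2 then some (Sym2.mk p.1 p.2) else none)) := by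
  induction u with
  | nil =>
    intro v hl
    obtain rfl := (List.length_eq_zero_iff.mp hl.symm)
    rfl
  | cons x u ih =>
    intro v hl
    cases v with
    | nil => simp at hl
    | cons y v =>
      rw [subExt_cons, subExt_cons,
        List.zip_append (by rw [hφ, hφ]), List.filterMap_append,
        List.zip_cons_cons]
      by_cases hxy : x = y
      · subst hxy
        rw [List.filterMap_cons_none (by simp), ih v (by simpa using hl),
          filterMap_zip_self]
        rfl
      · rw [List.filterMap_cons_some (b := Sym2.mk x y) (by simp [hxy]), ih v (by simpa using hl)]
        rw [subExt_cons, discrep_mk]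

private lemma discrep_subComp {φ τ : A → List A} {k : ℕ} (hφ : ∀ a, (φ a).length = k)
    (hτ : ∀ a b, (τ a).length = (τ b).length) (α : Sym2 A) :
    discrep (subComp φ τ) α = subExt (discrep φ) (discrep τ α) := by
  induction α using Sym2.ind with
  | _ a b =>
    rw [discrep_mk, discrep_mk]
    exact zip_flatMap_key hφ (τ a) (τ b) (hτ a b)

private lemma subPow_succ (φ : A → List A) (n : ℕ) (a : A) :
    subPow φ (n + 1) a = subExt φ (subPow φ n a) := rfl

private lemma subPow_discrep {φ : A → List A} {k : ℕ} (hφ : ∀ a, (φ a).length = k)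
    (n : ℕ) {α : Sym2 A} (hα : ¬ α.IsDiag) :
    subPow (discrep φ) n α = discrep (subPow φ n) α := by
  induction α using Sym2.ind with
  | _ a b =>
    rw [Sym2.mk_isDiag_iff] at hα
    induction n with
    | zero =>
      show [Sym2.mk a b] = _
      rw [discrep_mk]
      show _ = List.filterMap _ ([a].zip [b])
      simp [hα]
    | succ n ihn =>
      rw [subPow_succ, ihn,
        ← discrep_subComp hφ (fun x y => by rw [length_subPow hφ, length_subPow hφ])]
      rfl

private lemma nondiag_of_mem_subPow_discrep {φ : A → List A} {γ α : Sym2 A} {n : ℕ}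
    (hα : ¬ α.IsDiag) (h : γ ∈ subPow (discrep φ) n α) : ¬ γ.IsDiag := by
  cases n with
  | zero =>
    obtain rfl : γ = α := by simpa [subPow] using h
    exact hα
  | succ n =>
    rw [subPow_succ, subExt, List.mem_flatMap] at h
    obtain ⟨c, -, hc⟩ := h
    exact nondiag_of_mem_discrep hc

private lemma count_subExt (ψ : Sym2 A → List (Sym2 A)) (w : List (Sym2 A)) (x : Sym2 A) :
    (subExt ψ w).count x = (w.map fun b => (ψ b).count x).sum := by
  induction w with
  | nil => rfl
  | cons c w ih => rw [subExt_cons, List.count_append, ih, List.map_cons, List.sum_cons]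

private lemma sum_map_count {B : Type*} [Fintype B] [DecidableEq B]
    (g : B → ℕ) (w : List B) : (w.map g).sum = ∑ b : B, w.count b * g b := by
  induction w with
  | nil => simp
  | cons c w ih =>
    rw [List.map_cons, List.sum_cons, ih]
    calc g c + ∑ b : B, w.count b * g b
        = (∑ b : B, if b = c then g b else 0) + ∑ b : B, w.count b * g b := by
          rw [Finset.sum_ite_eq' Finset.univ c g, if_pos (Finset.mem_univ c)]
      _ = ∑ b : B, ((if b = c then g b else 0) + w.count b * g b) :=
          Finset.sum_add_distrib.symm
      _ = ∑ b : B, (c :: w).count b * g b := Finset.sum_congr rfl fun b _ => by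
          rw [List.count_cons, Nat.add_mul, ite_mul, one_mul, zero_mul, Nat.add_comm]
          congr 1
          by_cases h : b = c
          · simp [h]
          · simp [h, Ne.symm h]

private lemma discrepMatrix_pow [Fintype A] (φ : A → List A) (n : ℕ)
    (α β : PairAlphabet A) :
    (discrepMatrix φ ^ n) α β = (subPow (discrep φ) n β.1).count α.1 := by
  induction n generalizing α β with
  | zero =>
    show (1 : Matrix (PairAlphabet A) (PairAlphabet A) ℕ) α β = List.count α.1 [β.1]
    rw [Matrix.one_apply, List.count_singleton']
    by_cases h : α = β
    · rw [if_pos h, if_pos (congrArg Subtype.val h.symm)]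
    · rw [if_neg h, if_neg (fun he => h (Subtype.ext he.symm))]
  | succ n ih =>
    rw [pow_succ', Matrix.mul_apply, subPow_succ, count_subExt,
      sum_map_count (fun b => (discrep φ b).count α.1) (subPow (discrep φ) n β.1)]
    have h1 : ∀ j : PairAlphabet A, discrepMatrix φ α j * (discrepMatrix φ ^ n) j β
        = (subPow (discrep φ) n β.1).count j.1 * (discrep φ j.1).count α.1 := fun j => by
      rw [ih, discrepMatrix, Nat.mul_comm]
    rw [Finset.sum_congr rfl fun j _ => h1 j,
      ← Finset.sum_subtype (Finset.univ.filter fun b : Sym2 A => ¬ b.IsDiag)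
        (fun b => by simp)
        (fun b : Sym2 A => (subPow (discrep φ) n β.1).count b * (discrep φ b).count α.1),
      Finset.sum_filter]
    refine Finset.sum_congr rfl fun b _ => ?_
    by_cases hb : b.IsDiag
    · rw [if_neg (not_not_intro hb),
        List.count_eq_zero.mpr (fun hmem => nondiag_of_mem_subPow_discrep β.2 hmem hb),
        Nat.zero_mul]
    · rw [if_pos hb]

end Aux

/-- For a substitution `φ` of constant length `k ≥ 2` over a finite
alphabet the following are equivalent: (i) the incidence matrix of `φ_s` is nilpotent;
(ii) there is `n` with `(φ_s)^n(α)` empty for every unordered pair `α` of distinct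
letters; (iii) there is `n` such that all the words `φ^n(a)`, `a ∈ A`, coincide. -/
theorem stmt6 [DecidableEq A] [Fintype A] (k : ℕ) (hk : 2 ≤ k) (φ : A → List A)
    (hφ : ∀ a, (φ a).length = k) :
    (IsNilpotent (discrepMatrix φ) ↔
      ∃ n : ℕ, ∀ α : Sym2 A, ¬ α.IsDiag → subPow (discrep φ) n α = []) ∧
    ((∃ n : ℕ, ∀ α : Sym2 A, ¬ α.IsDiag → subPow (discrep φ) n α = []) ↔
      ∃ n : ℕ, ∀ a b : A, subPow φ n a = subPow φ n b) := by
  constructor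
  · constructor
    · rintro ⟨n, hn⟩
      refine ⟨n, fun α hα => ?_⟩
      by_contra hne
      obtain ⟨γ, hγ⟩ := List.exists_mem_of_ne_nil _ hne
      have hγd : ¬ γ.IsDiag := nondiag_of_mem_subPow_discrep hα hγ
      have h0 : (discrepMatrix φ ^ n) ⟨γ, hγd⟩ ⟨α, hα⟩ = 0 := by rw [hn]; rfl
      rw [discrepMatrix_pow, List.count_eq_zero] at h0
      exact h0 hγ
    · rintro ⟨n, hn⟩
      refine ⟨n, ?_⟩
      ext α β
      rw [discrepMatrix_pow, hn β.1 β.2]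
      rfl
  · constructor
    · rintro ⟨n, hn⟩
      refine ⟨n, fun a b => ?_⟩
      by_cases hab : a = b
      · rw [hab]
      · have hα : ¬ (Sym2.mk a b).IsDiag := by rwa [Sym2.mk_isDiag_iff]
        have h := hn _ hα
        rw [subPow_discrep hφ n hα, discrep_mk] at h
        exact eq_of_filterMap_zip _ _
          (by rw [length_subPow hφ, length_subPow hφ]) h
    · rintro ⟨n, hn⟩
      refine ⟨n, fun α hα => ?_⟩
      induction α using Sym2.ind with
      | _ a b =>
        rw [subPow_discrep hφ n hα, discrep_mk, hn a b, filterMap_zip_self]
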